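/- arXiv:1810.01218 — 3 statements merged into one kernel-verified Lean document; each statement's English description precedes it below -/
import Mathlib

section
/- (Weyl's inequality) Let A and B be N×N Hermitian matrices with eigenvalues λ_1 ≥ ... ≥ λ_N and μ_1 ≥ ... ≥ μ_N respectively, and let C = A + B with eigenvalues ν_1 ≥ ... ≥ ν_N. Then for indices i, j ≥ 0 with i + j + 1 ≤ N: ν_{i+j+1} ≤ λ_{i+1} + μ_{j+1}, and ν_{N−i−j} ≥ λ_{N−i} + μ_{N−j}. -/
open Finset Submodule

local notation "⟪" x ", " y "⟫" => @inner ℂ _ _ x y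

variable {N : ℕ}

abbrev E (N : ℕ) := EuclideanSpace ℂ (Fin N)

lemma qf (b : OrthonormalBasis (Fin N) ℂ (E N)) (T : E N →ₗ[ℂ] E N) (d : Fin N → ℝ)
    (hT : ∀ i, T (b i) = (d i : ℂ) • b i) (x : E N) :
    ⟪x, T x⟫ = ((∑ i, d i * ‖b.repr x i‖^2 : ℝ) : ℂ) := by
  push_cast
  conv_lhs => rw [← b.sum_repr x, map_sum]
  simp_rw [map_smul, hT, inner_sum, inner_smul_right, b.sum_repr x]
  congr 1
  ext i
  have h1 : ⟪x, b i⟫ = (starRingEnd ℂ) (b.repr x i) := by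
    rw [b.repr_apply_apply, inner_conj_symm]
  have h2 : (b.repr x i) * (starRingEnd ℂ) (b.repr x i) = (‖b.repr x i‖:ℂ)^2 := by
    rw [RCLike.mul_conj]; norm_num
  rw [h1, mul_left_comm, h2]

lemma coeff_zero (b : OrthonormalBasis (Fin N) ℂ (E N)) (S : Finset (Fin N))
    {x : E N} (hx : x ∈ span ℂ (b '' ↑S)) {i : Fin N} (hi : i ∉ S) :
    b.repr x i = 0 := by
  rw [b.repr_apply_apply]
  induction hx using Submodule.span_induction with
  | mem y hy =>
    obtain ⟨k, hk, rfl⟩ := hy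
    exact b.orthonormal.2 (fun h => hi (h ▸ hk))
  | zero => simp
  | add y z _ _ hy hz => rw [inner_add_right, hy, hz, add_zero]
  | smul c y _ hy => rw [inner_smul_right, hy, mul_zero]

lemma parseval (b : OrthonormalBasis (Fin N) ℂ (E N)) (x : E N) :
    ∑ i, ‖b.repr x i‖^2 = ‖x‖^2 := by
  have h := qf b LinearMap.id (fun _ => 1) (by simp) x
  simp only [LinearMap.id_apply] at h
  have h4 := congrArg Complex.re h
  rw [Complex.ofReal_re] at h4
  have h5 : (⟪x, x⟫).re = ‖x‖^2 := @inner_self_eq_norm_sq ℂ _ _ _ _ x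
  rw [h5] at h4
  simpa using h4.symm

lemma rayleigh_le (b : OrthonormalBasis (Fin N) ℂ (E N)) (T : E N →ₗ[ℂ] E N) (d : Fin N → ℝ)
    (hT : ∀ i, T (b i) = (d i : ℂ) • b i) (S : Finset (Fin N)) (a : ℝ)
    (hd : ∀ i ∈ S, d i ≤ a) {x : E N} (hx : ‖x‖ = 1) (hmem : x ∈ span ℂ (b '' ↑S)) :
    Complex.re ⟪x, T x⟫ ≤ a := by
  have hq := qf b T d hT x
  have hre : Complex.re ⟪x, T x⟫ = ∑ i, d i * ‖b.repr x i‖^2 := by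
    rw [hq, Complex.ofReal_re]
  rw [hre]
  have hvan : ∀ i ∉ S, ‖b.repr x i‖^2 = 0 := fun i hi => by
    rw [coeff_zero b S hmem hi]; simp
  have hS : ∑ i, d i * ‖b.repr x i‖^2 = ∑ i ∈ S, d i * ‖b.repr x i‖^2 := by
    rw [← Finset.sum_subset (Finset.subset_univ S)]
    intro i _ hi; rw [hvan i hi, mul_zero]
  have hS2 : ∑ i, ‖b.repr x i‖^2 = ∑ i ∈ S, ‖b.repr x i‖^2 := by
    rw [← Finset.sum_subset (Finset.subset_univ S)]
    intro i _ hi; exact hvan i hi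
  have hsum1 : ∑ i ∈ S, ‖b.repr x i‖^2 = 1 := by
    rw [← hS2, parseval, hx]; norm_num
  calc ∑ i, d i * ‖b.repr x i‖^2 = ∑ i ∈ S, d i * ‖b.repr x i‖^2 := hS
    _ ≤ ∑ i ∈ S, a * ‖b.repr x i‖^2 := by
        apply Finset.sum_le_sum
        intro i hi
        exact mul_le_mul_of_nonneg_right (hd i hi) (by positivity)
    _ = a := by rw [← Finset.mul_sum, hsum1, mul_one]

lemma finrank_span_on (b : OrthonormalBasis (Fin N) ℂ (E N)) (S : Finset (Fin N)) :
    Module.finrank ℂ (span ℂ (b '' ↑S)) = S.card := by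
  have hli : LinearIndependent ℂ (fun i : S => b i) :=
    (b.orthonormal.comp _ Subtype.val_injective).linearIndependent
  have hrange : Set.range (fun i : S => b i) = b '' ↑S := by
    ext y; simp
  rw [← hrange, finrank_span_eq_card hli, Fintype.card_coe]

lemma exists_unit_mem (U V W : Submodule ℂ (E N))
    (h : 2 * N < Module.finrank ℂ U + Module.finrank ℂ V + Module.finrank ℂ W) :
    ∃ x : E N, ‖x‖ = 1 ∧ x ∈ U ∧ x ∈ V ∧ x ∈ W := by
  have hN : Module.finrank ℂ (E N) = N := finrank_euclideanSpace_fin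
  have key : ∀ P Q : Submodule ℂ (E N),
      Module.finrank ℂ P + Module.finrank ℂ Q ≤ N + Module.finrank ℂ (P ⊓ Q : Submodule ℂ (E N)) := by
    intro P Q
    have := Submodule.finrank_sup_add_finrank_inf_eq P Q
    have h2 : Module.finrank ℂ (P ⊔ Q : Submodule ℂ (E N)) ≤ N := le_of_le_of_eq (Submodule.finrank_le _) hN
    omega
  have h1 := key U V
  have h2 := key (U ⊓ V) W
  have hUVW : Module.finrank ℂ (U ⊓ V ⊓ W : Submodule ℂ (E N)) ≠ 0 := by
    have hUV := Submodule.finrank_le (U ⊓ V : Submodule ℂ (E N))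
    omega
  rw [← Nat.pos_iff_ne_zero, Module.finrank_pos_iff_exists_ne_zero] at hUVW
  obtain ⟨⟨y, hy⟩, hy0⟩ := hUVW
  have hyne : y ≠ 0 := by
    intro h0; apply hy0; ext; simp [h0]
  refine ⟨‖y‖⁻¹ • y, ?_, ?_, ?_, ?_⟩
  · rw [norm_smul, norm_inv, norm_norm, inv_mul_cancel₀ (norm_ne_zero_iff.mpr hyne)]
  · exact Submodule.smul_of_tower_mem _ _ hy.1.1
  · exact Submodule.smul_of_tower_mem _ _ hy.1.2
  · exact Submodule.smul_of_tower_mem _ _ hy.2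

lemma card_filter_aux (f g : Fin N → ℝ) (p : ℝ → Prop) [DecidablePred p]
    (hfg : Finset.univ.val.map f = Finset.univ.val.map g) :
    (univ.filter (fun i => p (f i))).card = (univ.filter (fun i => p (g i))).card := by
  have h1 : ∀ h : Fin N → ℝ, (univ.filter (fun i => p (h i))).card
      = Multiset.card ((Finset.univ.val.map h).filter p) := by
    intro h
    rw [Multiset.filter_map, Multiset.card_map]
    rfl
  rw [h1 f, h1 g, hfg]

lemma card_filter_le (f g : Fin N → ℝ) (hfg : Finset.univ.val.map f = Finset.univ.val.map g)
    (hf : Antitone f) (r : Fin N) :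
    N - r ≤ (univ.filter (fun i => g i ≤ f r)).card := by
  rw [← card_filter_aux f g (fun v => v ≤ f r) hfg]
  calc N - (r : ℕ) = (Finset.Ici r).card := (Fin.card_Ici r).symm
    _ ≤ _ := Finset.card_le_card (by
        intro i hi
        rw [Finset.mem_Ici] at hi
        simp only [Finset.mem_filter, Finset.mem_univ, true_and]
        exact hf hi)

lemma card_filter_ge (f g : Fin N → ℝ) (hfg : Finset.univ.val.map f = Finset.univ.val.map g)
    (hf : Antitone f) (r : Fin N) :
    (r : ℕ) + 1 ≤ (univ.filter (fun i => f r ≤ g i)).card := by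
  rw [← card_filter_aux f g (fun v => f r ≤ v) hfg]
  calc (r : ℕ) + 1 = (Finset.Iic r).card := (Fin.card_Iic r).symm
    _ ≤ _ := Finset.card_le_card (by
        intro i hi
        rw [Finset.mem_Iic] at hi
        simp only [Finset.mem_filter, Finset.mem_univ, true_and]
        exact hf hi)

lemma rayleigh_ge (b : OrthonormalBasis (Fin N) ℂ (E N)) (T : E N →ₗ[ℂ] E N) (d : Fin N → ℝ)
    (hT : ∀ i, T (b i) = (d i : ℂ) • b i) (S : Finset (Fin N)) (a : ℝ)
    (hd : ∀ i ∈ S, a ≤ d i) {x : E N} (hx : ‖x‖ = 1) (hmem : x ∈ span ℂ (b '' ↑S)) :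
    a ≤ Complex.re ⟪x, T x⟫ := by
  have := rayleigh_le b (-T) (fun i => -(d i)) (fun i => by
      rw [LinearMap.neg_apply, hT i]; push_cast; rw [neg_smul]) S (-a)
    (fun i hi => neg_le_neg (hd i hi)) hx hmem
  rw [LinearMap.neg_apply, inner_neg_right, Complex.neg_re] at this
  linarith

lemma half_core (bA bB bC : OrthonormalBasis (Fin N) ℂ (E N)) (TA TB : E N →ₗ[ℂ] E N)
    (dA dB dC : Fin N → ℝ)
    (hTA : ∀ i, TA (bA i) = (dA i : ℂ) • bA i)
    (hTB : ∀ i, TB (bB i) = (dB i : ℂ) • bB i)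
    (hTC : ∀ i, (TA + TB) (bC i) = (dC i : ℂ) • bC i)
    (a b c : ℝ)
    (hcard : 2 * N < (univ.filter (fun i => dA i ≤ a)).card
      + (univ.filter (fun i => dB i ≤ b)).card
      + (univ.filter (fun i => c ≤ dC i)).card) :
    c ≤ a + b := by
  set SA := univ.filter (fun i => dA i ≤ a)
  set SB := univ.filter (fun i => dB i ≤ b)
  set SC := univ.filter (fun i => c ≤ dC i)
  obtain ⟨x, hx1, hxA, hxB, hxC⟩ := exists_unit_mem
    (span ℂ (bA '' ↑SA)) (span ℂ (bB '' ↑SB)) (span ℂ (bC '' ↑SC))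
    (by rw [finrank_span_on, finrank_span_on, finrank_span_on]; exact hcard)
  have hA' : Complex.re ⟪x, TA x⟫ ≤ a :=
    rayleigh_le bA TA dA hTA SA a (fun i hi => (Finset.mem_filter.mp hi).2) hx1 hxA
  have hB' : Complex.re ⟪x, TB x⟫ ≤ b :=
    rayleigh_le bB TB dB hTB SB b (fun i hi => (Finset.mem_filter.mp hi).2) hx1 hxB
  have hC' : c ≤ Complex.re ⟪x, (TA + TB) x⟫ :=
    rayleigh_ge bC (TA + TB) dC hTC SC c (fun i hi => (Finset.mem_filter.mp hi).2) hx1 hxC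
  rw [LinearMap.add_apply, inner_add_right, Complex.add_re] at hC'
  linarith

lemma half_core_ge (bA bB bC : OrthonormalBasis (Fin N) ℂ (E N)) (TA TB : E N →ₗ[ℂ] E N)
    (dA dB dC : Fin N → ℝ)
    (hTA : ∀ i, TA (bA i) = (dA i : ℂ) • bA i)
    (hTB : ∀ i, TB (bB i) = (dB i : ℂ) • bB i)
    (hTC : ∀ i, (TA + TB) (bC i) = (dC i : ℂ) • bC i)
    (a b c : ℝ)
    (hcard : 2 * N < (univ.filter (fun i => a ≤ dA i)).card
      + (univ.filter (fun i => b ≤ dB i)).card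
      + (univ.filter (fun i => dC i ≤ c)).card) :
    a + b ≤ c := by
  have := half_core bA bB bC (-TA) (-TB) (fun i => -(dA i)) (fun i => -(dB i)) (fun i => -(dC i))
    (fun i => by rw [LinearMap.neg_apply, hTA i]; push_cast; rw [neg_smul])
    (fun i => by rw [LinearMap.neg_apply, hTB i]; push_cast; rw [neg_smul])
    (fun i => by
      have : (-TA + -TB) = -(TA + TB) := by abel
      rw [this, LinearMap.neg_apply, hTC i]; push_cast; rw [neg_smul])
    (-a) (-b) (-c)
    (by
      have e1 : univ.filter (fun i => -(dA i) ≤ -a) = univ.filter (fun i => a ≤ dA i) :=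
        Finset.ext fun i => by simp
      have e2 : univ.filter (fun i => -(dB i) ≤ -b) = univ.filter (fun i => b ≤ dB i) :=
        Finset.ext fun i => by simp
      have e3 : univ.filter (fun i => -c ≤ -(dC i)) = univ.filter (fun i => dC i ≤ c) :=
        Finset.ext fun i => by simp
      rw [e1, e2, e3]; exact hcard)
  linarith

lemma eigen_apply {A : Matrix (Fin N) (Fin N) ℂ} (hA : A.IsHermitian) (i : Fin N) :
    Matrix.toEuclideanLin A (hA.eigenvectorBasis i)
      = ((hA.eigenvalues i : ℝ) : ℂ) • hA.eigenvectorBasis i := by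
  apply (WithLp.equiv 2 (Fin N → ℂ)).injective
  simp only [Matrix.toEuclideanLin_apply, Equiv.apply_symm_apply, WithLp.equiv_apply, WithLp.ofLp_toLp, WithLp.ofLp_smul]
  have h := hA.mulVec_eigenvectorBasis i
  have hcoe : (WithLp.equiv 2 (Fin N → ℂ)) (hA.eigenvectorBasis i) = ⇑(hA.eigenvectorBasis i) := rfl
  rw [h]
  ext j
  simp [Complex.real_smul]


/-- Weyl's inequalities: for Hermitian `A`, `B`, `C = A + B` with eigenvalues
listed in nonincreasing order `λ`, `μ`, `ν`, for 0-based indices `i`, `j` with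
`i + j < N`: `ν_{i+j+1} ≤ λ_{i+1} + μ_{j+1}` and `ν_{N−i−j} ≥ λ_{N−i} + μ_{N−j}`. -/
theorem stmt6 (N : ℕ) (A B : Matrix (Fin N) (Fin N) ℂ)
    (hA : A.IsHermitian) (hB : B.IsHermitian) (hC : (A + B).IsHermitian)
    (lam mu nu : Fin N → ℝ)
    (hlam : Antitone lam) (hmu : Antitone mu) (hnu : Antitone nu)
    (hlamE : Finset.univ.val.map lam = Finset.univ.val.map hA.eigenvalues)
    (hmuE : Finset.univ.val.map mu = Finset.univ.val.map hB.eigenvalues)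
    (hnuE : Finset.univ.val.map nu = Finset.univ.val.map hC.eigenvalues) :
    ∀ i j : ℕ, ∀ h : i + j < N,
      nu ⟨i + j, h⟩ ≤ lam ⟨i, by omega⟩ + mu ⟨j, by omega⟩ ∧
      lam ⟨N - 1 - i, by omega⟩ + mu ⟨N - 1 - j, by omega⟩ ≤
        nu ⟨N - 1 - (i + j), by omega⟩ := by
  intro i j h
  set TA := Matrix.toEuclideanLin A with hTAdef
  set TB := Matrix.toEuclideanLin B with hTBdef
  have hsum : Matrix.toEuclideanLin (A + B) = TA + TB := map_add _ A B
  have hTA : ∀ k, TA (hA.eigenvectorBasis k) = ((hA.eigenvalues k : ℝ) : ℂ) • hA.eigenvectorBasis k :=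
    eigen_apply hA
  have hTB : ∀ k, TB (hB.eigenvectorBasis k) = ((hB.eigenvalues k : ℝ) : ℂ) • hB.eigenvectorBasis k :=
    eigen_apply hB
  have hTC : ∀ k, (TA + TB) (hC.eigenvectorBasis k)
      = ((hC.eigenvalues k : ℝ) : ℂ) • hC.eigenvectorBasis k := by
    rw [← hsum]; exact eigen_apply hC
  constructor
  · apply half_core hA.eigenvectorBasis hB.eigenvectorBasis hC.eigenvectorBasis TA TB
      hA.eigenvalues hB.eigenvalues hC.eigenvalues hTA hTB hTC
    have c1 := card_filter_le lam hA.eigenvalues hlamE hlam ⟨i, by omega⟩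
    have c2 := card_filter_le mu hB.eigenvalues hmuE hmu ⟨j, by omega⟩
    have c3 := card_filter_ge nu hC.eigenvalues hnuE hnu ⟨i + j, h⟩
    simp only [Fin.val_mk] at c1 c2 c3
    omega
  · apply half_core_ge hA.eigenvectorBasis hB.eigenvectorBasis hC.eigenvectorBasis TA TB
      hA.eigenvalues hB.eigenvalues hC.eigenvalues hTA hTB hTC
    have c1 := card_filter_ge lam hA.eigenvalues hlamE hlam ⟨N - 1 - i, by omega⟩
    have c2 := card_filter_ge mu hB.eigenvalues hmuE hmu ⟨N - 1 - j, by omega⟩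
    have c3 := card_filter_le nu hC.eigenvalues hnuE hnu ⟨N - 1 - (i + j), by omega⟩
    simp only [Fin.val_mk] at c1 c2 c3
    omega
end

section
/- Let s ∈ {−1,1}^N, R = ∑_{n≠0} (J_n s)(J_n s)^T, and assume R is invertible. Then the metric M(s) = s^T R^{-1} s satisfies M(s) ≥ 16/(9N³). -/
open Matrix

/-- The `N×N` shift matrix `J_n`: ones on the `n`-th off-diagonal, zeros elsewhere. -/
def shiftJ (N : ℕ) (n : ℤ) : Matrix (Fin N) (Fin N) ℝ :=
  Matrix.of fun i j => if (j : ℤ) = (i : ℤ) + n then 1 else 0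

/-- `R = ∑_{n≠0} (J_n s)(J_n s)ᵀ`. -/
noncomputable def Rmat (N : ℕ) (s : Fin N → ℝ) : Matrix (Fin N) (Fin N) ℝ :=
  ∑ n ∈ (Finset.Icc (1 - (N : ℤ)) ((N : ℤ) - 1)).erase 0,
    Matrix.vecMulVec (shiftJ N n *ᵥ s) (shiftJ N n *ᵥ s)

lemma quad_gen {N : ℕ} (F : Finset ℤ) (v : ℤ → Fin N → ℝ) (u w : Fin N → ℝ) :
    u ⬝ᵥ ((∑ n ∈ F, Matrix.vecMulVec (v n) (v n)) *ᵥ w) =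
      ∑ n ∈ F, (u ⬝ᵥ v n) * (v n ⬝ᵥ w) := by
  simp only [Matrix.mulVec, dotProduct, Finset.sum_apply,
    Matrix.sum_apply, Matrix.vecMulVec_apply, Finset.sum_mul, Finset.mul_sum]
  calc (∑ i : Fin N, ∑ j : Fin N, ∑ n ∈ F, u i * (v n i * v n j * w j))
      = ∑ i : Fin N, ∑ n ∈ F, ∑ j : Fin N, u i * (v n i * v n j * w j) :=
        Finset.sum_congr rfl fun i _ => Finset.sum_comm
    _ = ∑ n ∈ F, ∑ i : Fin N, ∑ j : Fin N, u i * (v n i * v n j * w j) :=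
        Finset.sum_comm
    _ = ∑ n ∈ F, ∑ j : Fin N, ∑ i : Fin N, u i * (v n i * v n j * w j) :=
        Finset.sum_congr rfl fun n _ => Finset.sum_comm
    _ = ∑ n ∈ F, ∑ j : Fin N, ∑ i : Fin N, u i * v n i * (v n j * w j) :=
        Finset.sum_congr rfl fun n _ => Finset.sum_congr rfl fun j _ =>
          Finset.sum_congr rfl fun i _ => by ring

lemma quad_form (N : ℕ) (s u w : Fin N → ℝ) :
    u ⬝ᵥ (Rmat N s *ᵥ w) =
      ∑ n ∈ (Finset.Icc (1 - (N : ℤ)) ((N : ℤ) - 1)).erase 0,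
        (u ⬝ᵥ (shiftJ N n *ᵥ s)) * ((shiftJ N n *ᵥ s) ⬝ᵥ w) :=
  quad_gen _ (fun n => shiftJ N n *ᵥ s) u w

lemma Jdot_bound (N : ℕ) (s : Fin N → ℝ) (hs : ∀ i, s i = 1 ∨ s i = -1) (n : ℤ) :
    |s ⬝ᵥ (shiftJ N n *ᵥ s)| ≤ (N : ℝ) := by
  have habs : ∀ i, |s i| = 1 := fun i => by rcases hs i with h | h <;> simp [h]
  have h1 : ∀ i, |(shiftJ N n *ᵥ s) i| ≤ 1 := by
    intro i
    simp only [Matrix.mulVec, dotProduct, shiftJ, Matrix.of_apply]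
    have hcard : (Finset.univ.filter fun j : Fin N => (j : ℤ) = (i : ℤ) + n).card ≤ 1 := by
      refine Finset.card_le_one.mpr fun a ha b hb => ?_
      simp only [Finset.mem_filter] at ha hb
      have : (a : ℤ) = (b : ℤ) := by rw [ha.2, hb.2]
      exact_mod_cast Fin.ext (by exact_mod_cast this)
    calc |∑ j : Fin N, (if (j : ℤ) = (i : ℤ) + n then (1:ℝ) else 0) * s j|
        ≤ ∑ j : Fin N, |(if (j : ℤ) = (i : ℤ) + n then (1:ℝ) else 0) * s j| :=
          Finset.abs_sum_le_sum_abs _ _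
      _ = ∑ j : Fin N, (if (j : ℤ) = (i : ℤ) + n then (1:ℝ) else 0) := by
          refine Finset.sum_congr rfl fun j _ => ?_
          rw [abs_mul, habs j, mul_one]
          split <;> simp
      _ = ((Finset.univ.filter fun j : Fin N => (j : ℤ) = (i : ℤ) + n).card : ℝ) := by
          rw [Finset.sum_boole]
      _ ≤ 1 := by exact_mod_cast hcard
  calc |s ⬝ᵥ (shiftJ N n *ᵥ s)| ≤ ∑ i, |s i * (shiftJ N n *ᵥ s) i| :=
        Finset.abs_sum_le_sum_abs _ _
    _ ≤ ∑ _i : Fin N, (1 : ℝ) := by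
        refine Finset.sum_le_sum fun i _ => ?_
        rw [abs_mul, habs i, one_mul]; exact h1 i
    _ = N := by simp

/-- For `s ∈ {−1,1}^N` with `R` invertible, the metric `M(s) = sᵀ R⁻¹ s`
satisfies `M(s) ≥ 16/(9N³)`. -/
theorem stmt10 (N : ℕ) (hN : 0 < N) (s : Fin N → ℝ)
    (hs : ∀ i, s i = 1 ∨ s i = -1) (hinv : IsUnit (Rmat N s).det) :
    16 / (9 * (N : ℝ) ^ 3) ≤ s ⬝ᵥ (Rmat N s)⁻¹ *ᵥ s := by
  classical
  set F := (Finset.Icc (1 - (N : ℤ)) ((N : ℤ) - 1)).erase 0 with hF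
  set y := (Rmat N s)⁻¹ *ᵥ s with hy
  have hRy : Rmat N s *ᵥ y = s := by
    rw [hy, Matrix.mulVec_mulVec, Matrix.mul_nonsing_inv _ hinv, Matrix.one_mulVec]
  have hN2 : 2 ≤ N := by
    by_contra h
    have hN1 : N = 1 := by omega
    subst hN1
    have hFe : ((Finset.Icc (1 - ((1:ℕ) : ℤ)) (((1:ℕ) : ℤ) - 1)).erase 0) = ∅ := by decide
    have hR0 : Rmat 1 s = 0 := by rw [Rmat, hFe, Finset.sum_empty]
    rw [hR0] at hinv
    simp at hinv
  have hss : s ⬝ᵥ s = (N : ℝ) := by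
    simp only [dotProduct]
    have h1 : ∀ i, s i * s i = 1 := fun i => by rcases hs i with h | h <;> simp [h]
    simp [h1]
  set a : ℤ → ℝ := fun n => s ⬝ᵥ (shiftJ N n *ᵥ s) with ha
  set b : ℤ → ℝ := fun n => (shiftJ N n *ᵥ s) ⬝ᵥ y with hb
  have hsum : (N : ℝ) = ∑ n ∈ F, a n * b n := by
    rw [← hss, show s ⬝ᵥ s = s ⬝ᵥ (Rmat N s *ᵥ y) from by rw [hRy],
      quad_form N s s y]
  have hA : ∑ n ∈ F, (a n) ^ 2 ≤ 2 * (N : ℝ) ^ 3 := by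
    have hcard : (F.card : ℝ) ≤ 2 * N := by
      have h1 : F.card ≤ (Finset.Icc (1 - (N : ℤ)) ((N : ℤ) - 1)).card :=
        Finset.card_erase_le
      have h2 : (Finset.Icc (1 - (N : ℤ)) ((N : ℤ) - 1)).card
          = ((N : ℤ) - 1 + 1 - (1 - N)).toNat := Int.card_Icc _ _
      have : F.card ≤ 2 * N := by omega
      exact_mod_cast this
    calc ∑ n ∈ F, (a n) ^ 2 ≤ ∑ _n ∈ F, (N : ℝ) ^ 2 := by
          refine Finset.sum_le_sum fun n _ => ?_
          have h := Jdot_bound N s hs n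
          calc (a n) ^ 2 = |a n| ^ 2 := (sq_abs _).symm
            _ ≤ (N : ℝ) ^ 2 := pow_le_pow_left₀ (abs_nonneg _) h 2
      _ = F.card * (N : ℝ) ^ 2 := by rw [Finset.sum_const, nsmul_eq_mul]
      _ ≤ 2 * N * (N : ℝ) ^ 2 := mul_le_mul_of_nonneg_right hcard (by positivity)
      _ = 2 * (N : ℝ) ^ 3 := by ring
  have hB : s ⬝ᵥ y = ∑ n ∈ F, (b n) ^ 2 := by
    rw [show s ⬝ᵥ y = y ⬝ᵥ (Rmat N s *ᵥ y) from by
      rw [hRy, dotProduct_comm], quad_form N s y y]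
    refine Finset.sum_congr rfl fun n _ => ?_
    rw [dotProduct_comm, ← pow_two]
  have hCS : (N : ℝ) ^ 2 ≤ (∑ n ∈ F, (a n) ^ 2) * (∑ n ∈ F, (b n) ^ 2) := by
    calc (N : ℝ) ^ 2 = (∑ n ∈ F, a n * b n) ^ 2 := by rw [← hsum]
      _ ≤ _ := Finset.sum_mul_sq_le_sq_mul_sq F a b
  have hNpos : (0 : ℝ) < N := by exact_mod_cast hN
  have hBval : (N : ℝ) ^ 2 / (2 * (N : ℝ) ^ 3) ≤ ∑ n ∈ F, (b n) ^ 2 := by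
    rw [div_le_iff₀ (by positivity)]
    calc (N : ℝ) ^ 2 ≤ (∑ n ∈ F, (a n) ^ 2) * (∑ n ∈ F, (b n) ^ 2) := hCS
      _ ≤ 2 * (N : ℝ) ^ 3 * (∑ n ∈ F, (b n) ^ 2) :=
          mul_le_mul_of_nonneg_right hA (Finset.sum_nonneg fun n _ => sq_nonneg _)
      _ = (∑ n ∈ F, (b n) ^ 2) * (2 * (N : ℝ) ^ 3) := by ring
  have hfinal : 16 / (9 * (N : ℝ) ^ 3) ≤ (N : ℝ) ^ 2 / (2 * (N : ℝ) ^ 3) := by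
    rw [div_le_div_iff₀ (by positivity) (by positivity)]
    have hN2' : (2 : ℝ) ≤ N := by exact_mod_cast hN2
    have h4 : (4 : ℝ) ≤ (N : ℝ) ^ 2 := by nlinarith
    nlinarith [mul_le_mul_of_nonneg_right h4 (pow_pos hNpos 3).le]
  calc 16 / (9 * (N : ℝ) ^ 3) ≤ (N : ℝ) ^ 2 / (2 * (N : ℝ) ^ 3) := hfinal
    _ ≤ ∑ n ∈ F, (b n) ^ 2 := hBval
    _ = s ⬝ᵥ y := hB.symm
end

section
/- Let C = ([a₁, a₂]^T, [b₁, b₂]^T) be an ideal complementary code set with J = 2 users, M = 2 element codes each, of length N (i.e., all sums CAF, CCF, FCF in the complementary-code sense vanish identically). Then C' = ([−b₂, −b₁]^T, [a₂, a₁]^T) is also an ideal complementary code set. -/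
/-- Cyclic correlation of `x` and `y` at shift `v` (indices mod `N`). -/
def cyc (N : ℕ) [NeZero N] (x y : Fin N → ℝ) (v : ℕ) : ℝ :=
  ∑ n : Fin N, x n * y (n + (Fin.ofNat N v))

/-- Flipped correlation of `x` and `y` at shift `v`: wrapped terms get sign `−1`. -/
def flp (N : ℕ) [NeZero N] (x y : Fin N → ℝ) (v : ℕ) : ℝ :=
  ∑ n : Fin N, (if (n : ℕ) + v < N then (1 : ℝ) else -1) *
    (x n * y (n + (Fin.ofNat N v)))

/-- Ideal complementary code set with `J = 2` users and `M = 2` element codes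
`a₁, a₂` (user A) and `b₁, b₂` (user B): all summed cyclic auto-correlations at
nonzero shifts, all summed cyclic cross-correlations at every shift, and all
summed flipped correlations at nonzero shifts vanish. -/
def IsIdealCC (N : ℕ) [NeZero N] (a₁ a₂ b₁ b₂ : Fin N → ℝ) : Prop :=
  (∀ v : ℕ, 1 ≤ v → v < N → cyc N a₁ a₁ v + cyc N a₂ a₂ v = 0) ∧
  (∀ v : ℕ, 1 ≤ v → v < N → cyc N b₁ b₁ v + cyc N b₂ b₂ v = 0) ∧
  (∀ v : ℕ, v < N → cyc N a₁ b₁ v + cyc N a₂ b₂ v = 0) ∧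
  (∀ v : ℕ, 1 ≤ v → v < N → flp N a₁ a₁ v + flp N a₂ a₂ v = 0) ∧
  (∀ v : ℕ, 1 ≤ v → v < N → flp N b₁ b₁ v + flp N b₂ b₂ v = 0) ∧
  (∀ v : ℕ, 1 ≤ v → v < N → flp N a₁ b₁ v + flp N a₂ b₂ v = 0)

open Fin.NatCast

lemma ofNat_eq_cast (N : ℕ) [NeZero N] (v : ℕ) : Fin.ofNat N v = (v : Fin N) := rfl

lemma cyc_neg_neg (N : ℕ) [NeZero N] (x y : Fin N → ℝ) (v : ℕ) :
    cyc N (fun n => -(x n)) (fun n => -(y n)) v = cyc N x y v := by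
  simp [cyc]

lemma cyc_neg_left (N : ℕ) [NeZero N] (x y : Fin N → ℝ) (v : ℕ) :
    cyc N (fun n => -(x n)) y v = -cyc N x y v := by
  simp [cyc]

lemma flp_neg_neg (N : ℕ) [NeZero N] (x y : Fin N → ℝ) (v : ℕ) :
    flp N (fun n => -(x n)) (fun n => -(y n)) v = flp N x y v := by
  simp [flp]

lemma flp_neg_left (N : ℕ) [NeZero N] (x y : Fin N → ℝ) (v : ℕ) :
    flp N (fun n => -(x n)) y v = -flp N x y v := by
  unfold flp
  rw [← Finset.sum_neg_distrib]
  refine Finset.sum_congr rfl (fun n _ => ?_)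
  split <;> ring

lemma cyc_comm (N : ℕ) [NeZero N] (x y : Fin N → ℝ) (v : ℕ) :
    cyc N x y v = cyc N y x ((-(v : Fin N)).val) := by
  unfold cyc
  simp only [ofNat_eq_cast]
  rw [Fin.cast_val_eq_self]
  exact Fintype.sum_equiv (Equiv.addRight (v : Fin N)) _ _
    (fun n => by simp [mul_comm])

lemma flp_rev (N : ℕ) [NeZero N] (x y : Fin N → ℝ) (v : ℕ)
    (hv1 : 1 ≤ v) (hv2 : v < N) :
    flp N x y v = - flp N y x (N - v) := by
  have hNv : ((N - v : ℕ) : Fin N) = -(v : Fin N) := by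
    refine eq_neg_of_add_eq_zero_left ?_
    rw [← Nat.cast_add, Nat.sub_add_cancel hv2.le]
    simp
  unfold flp
  simp only [ofNat_eq_cast]
  rw [← Finset.sum_neg_distrib]
  refine Fintype.sum_equiv (Equiv.addRight (v : Fin N)) _ _ (fun n => ?_)
  simp only [Equiv.coe_addRight, hNv, add_neg_cancel_right]
  have hm : (n + (v : Fin N)).val = (n.val + v) % N := by
    rw [Fin.val_add, Fin.val_cast_of_lt hv2]
  by_cases hc : (n : ℕ) + v < N
  · have h1 : (n + (v : Fin N)).val = n.val + v := by rw [hm, Nat.mod_eq_of_lt hc]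
    have h2 : ¬ (n + (v : Fin N)).val + (N - v) < N := by rw [h1]; omega
    simp only [if_pos hc, h2, if_false]; ring
  · have h1 : (n + (v : Fin N)).val = n.val + v - N := by
      rw [hm, Nat.mod_eq_sub_mod (by omega),
        Nat.mod_eq_of_lt (by have := n.isLt; omega)]
    have h2 : (n + (v : Fin N)).val + (N - v) < N := by
      rw [h1]; have := n.isLt; omega
    simp only [if_neg hc, h2, if_true]; ring

/-- If `([a₁,a₂],[b₁,b₂])` is an ideal complementary code set, then so is
`([−b₂,−b₁],[a₂,a₁])`. -/
theorem stmt17 (N : ℕ) [NeZero N] (a₁ a₂ b₁ b₂ : Fin N → ℝ)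
    (h : IsIdealCC N a₁ a₂ b₁ b₂) :
    IsIdealCC N (fun n => -(b₂ n)) (fun n => -(b₁ n)) a₂ a₁ := by
  obtain ⟨hA, hB, hX, hFA, hFB, hFX⟩ := h
  refine ⟨?_, ?_, ?_, ?_, ?_, ?_⟩
  · intro v h1 h2
    rw [cyc_neg_neg, cyc_neg_neg]
    have := hB v h1 h2; linarith
  · intro v h1 h2
    have := hA v h1 h2; linarith
  · intro v h2
    rw [cyc_neg_left, cyc_neg_left, cyc_comm N b₂ a₂, cyc_comm N b₁ a₁]
    have := hX ((-(v : Fin N)).val) (Fin.is_lt _)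
    linarith
  · intro v h1 h2
    rw [flp_neg_neg, flp_neg_neg]
    have := hFB v h1 h2; linarith
  · intro v h1 h2
    have := hFA v h1 h2; linarith
  · intro v h1 h2
    rw [flp_neg_left, flp_neg_left, flp_rev N b₂ a₂ v h1 h2, flp_rev N b₁ a₁ v h1 h2]
    have := hFX (N - v) (by omega) (by omega)
    linarith
end
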